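/- The function f(x,y) := (1−x)H(y/(1−x)) + (1−y)H(x/(1−y)), defined on the triangle Ω = {(x,y) : x ≥ 0, y ≥ 0, x+y ≤ 1} (extended by continuity), attains its maximum over Ω uniquely at x₀ = y₀ = (5−√5)/10, and the maximum value is 2·log φ where φ = (1+√5)/2. -/

import Mathlib

/-- The natural-logarithm entropy function (with the convention
`Real.log 0 = 0`, this agrees with the continuous extension `H 0 = H 1 = 0`). -/
noncomputable def H (x : ℝ) : ℝ := -(x * Real.log x) - (1 - x) * Real.log (1 - x)

/-- The function f(x,y) = (1−x)H(y/(1−x)) + (1−y)H(x/(1−y)); with Lean's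
convention `a / 0 = 0` this agrees with the continuous extension of the
formula to the whole triangle Ω. -/
noncomputable def f (x y : ℝ) : ℝ :=
  (1 - x) * H (y / (1 - x)) + (1 - y) * H (x / (1 - y))

lemma mul_log_div' {y w : ℝ} (hy : 0 ≤ y) (hw : 0 < w) :
    y * Real.log (y / w) = y * Real.log y - y * Real.log w := by
  rcases hy.eq_or_lt with h | h
  · simp [← h]
  · rw [Real.log_div h.ne' hw.ne']; ring

lemma termval {y z : ℝ} (hy : 0 ≤ y) (hz : 0 ≤ z) :
    (y + z) * H (y / (y + z)) =
      (y + z) * Real.log (y + z) - y * Real.log y - z * Real.log z := by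
  rcases (add_nonneg hy hz).eq_or_lt with h | h
  · have hy0 : y = 0 := by linarith
    have hz0 : z = 0 := by linarith
    simp [hy0, hz0, H]
  · have hne : y + z ≠ 0 := h.ne'
    have h1 : 1 - y / (y + z) = z / (y + z) := by field_simp; ring
    have expand : (y + z) * H (y / (y + z)) =
        -(y * Real.log (y / (y + z))) - z * Real.log (z / (y + z)) := by
      unfold H
      rw [h1]
      field_simp
    rw [expand, mul_log_div' hy h, mul_log_div' hz h]
    ring

lemma fval {x y : ℝ} (hx : 0 ≤ x) (hy : 0 ≤ y) (hxy : x + y ≤ 1) :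
    f x y = (1 - x) * Real.log (1 - x) + (1 - y) * Real.log (1 - y)
      - x * Real.log x - y * Real.log y
      - 2 * ((1 - x - y) * Real.log (1 - x - y)) := by
  have hz : 0 ≤ 1 - x - y := by linarith
  have t1 := termval hy hz
  have t2 := termval hx hz
  have h1 : y + (1 - x - y) = 1 - x := by ring
  have h2 : x + (1 - x - y) = 1 - y := by ring
  rw [h1] at t1
  rw [h2] at t2
  unfold f
  rw [t1, t2]
  ring

lemma keyb_le {c p q : ℝ} (hp : 0 ≤ p) (hq : 0 < q) (hc : 0 < c) :
    p * Real.log q - p * Real.log p ≤ p * Real.log c + q / c - p := by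
  rcases hp.eq_or_lt with h | h
  · simp [← h]
    positivity
  · have h1 : 0 < q / (c * p) := by positivity
    have h2 := Real.log_le_sub_one_of_pos h1
    have h3 : Real.log (q / (c * p)) = Real.log q - Real.log c - Real.log p := by
      rw [Real.log_div hq.ne' (by positivity), Real.log_mul hc.ne' h.ne']; ring
    rw [h3] at h2
    have h4 := mul_le_mul_of_nonneg_left h2 h.le
    have h5 : p * (q / (c * p) - 1) = q / c - p := by field_simp
    rw [h5] at h4
    nlinarith [h4]

lemma keyb_lt {c p q : ℝ} (hp : 0 ≤ p) (hq : 0 < q) (hc : 0 < c) (hne : q ≠ c * p) :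
    p * Real.log q - p * Real.log p < p * Real.log c + q / c - p := by
  rcases hp.eq_or_lt with h | h
  · simp [← h]
    positivity
  · have h1 : 0 < q / (c * p) := by positivity
    have hne1 : q / (c * p) ≠ 1 := by
      intro habs
      apply hne
      field_simp at habs
      linarith [habs]
    have h2 := Real.log_lt_sub_one_of_pos h1 hne1
    have h3 : Real.log (q / (c * p)) = Real.log q - Real.log c - Real.log p := by
      rw [Real.log_div hq.ne' (by positivity), Real.log_mul hc.ne' h.ne']; ring
    rw [h3] at h2
    have h4 := mul_lt_mul_of_pos_left h2 h
    have h5 : p * (q / (c * p) - 1) = q / c - p := by field_simp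
    rw [h5] at h4
    nlinarith [h4]

set_option maxHeartbeats 1000000 in
theorem stmt18 :
    f ((5 - Real.sqrt 5) / 10) ((5 - Real.sqrt 5) / 10) =
        2 * Real.log ((1 + Real.sqrt 5) / 2) ∧
      ∀ x y : ℝ, 0 ≤ x → 0 ≤ y → x + y ≤ 1 →
        (x, y) ≠ ((5 - Real.sqrt 5) / 10, (5 - Real.sqrt 5) / 10) →
        f x y < 2 * Real.log ((1 + Real.sqrt 5) / 2) := by
  have hs0 : (0:ℝ) ≤ 5 := by norm_num
  have hs : Real.sqrt 5 ^ 2 = 5 := Real.sq_sqrt hs0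
  have hs2 : 2 < Real.sqrt 5 := by
    rw [show (2:ℝ) = Real.sqrt 4 by
      rw [show (4:ℝ) = 2 ^ 2 by norm_num, Real.sqrt_sq]; norm_num]
    exact Real.sqrt_lt_sqrt (by norm_num) (by norm_num)
  have hs3 : Real.sqrt 5 < 3 := (Real.sqrt_lt' (by norm_num)).mpr (by norm_num)
  set s := Real.sqrt 5 with hsdef
  set φ : ℝ := (1 + s) / 2 with hφdef
  have hφpos : 0 < φ := by rw [hφdef]; linarith
  have hφ1 : 1 < φ := by rw [hφdef]; linarith
  have hden1 : ((1:ℝ) + s) / 2 + 1 ≠ 0 := by positivity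
  have hden2 : ((1:ℝ) + s) / 2 ≠ 0 := by positivity
  have hφsq : φ ^ 2 = φ + 1 := by
    rw [hφdef]; field_simp; linear_combination hs
  have hlogφpos : 0 < Real.log φ := Real.log_pos hφ1
  have hx0pos : 0 < (5 - s) / 10 := by linarith
  have hx0le : (5 - s) / 10 + (5 - s) / 10 ≤ 1 := by linarith
  constructor
  · -- the value at the maximizer
    have hval := fval (le_of_lt hx0pos) (le_of_lt hx0pos) hx0le
    have hu0 : (1:ℝ) - (5 - s) / 10 = (5 + s) / 10 := by ring
    have hz0 : (1:ℝ) - (5 - s) / 10 - (5 - s) / 10 = s / 5 := by ring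
    rw [hval, hz0, hu0]
    have hu0pos : (0:ℝ) < (5 + s) / 10 := by linarith
    have hlx : Real.log ((5 - s) / 10) = Real.log ((5 + s) / 10) - 2 * Real.log φ := by
      have hx0eq : (5 - s) / 10 = ((5 + s) / 10) / φ ^ 2 := by
        rw [hφsq, hφdef]; field_simp; linear_combination (-1) * hs
      rw [hx0eq, Real.log_div hu0pos.ne' (by positivity), Real.log_pow]
      push_cast; ring
    have hlz : Real.log (s / 5) = Real.log ((5 + s) / 10) - Real.log φ := by
      have hz0eq : s / 5 = ((5 + s) / 10) / φ := by
        rw [hφdef]; field_simp; linear_combination 10 * hs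
      rw [hz0eq, Real.log_div hu0pos.ne' hφpos.ne']
    rw [hlx, hlz]
    ring
  · intro x y hx hy hxy hne
    by_cases hx1 : x = 1
    · have hy0 : y = 0 := by linarith
      subst hx1; subst hy0
      have h0 : f 1 0 = 0 := by norm_num [f, H]
      rw [h0]; linarith
    by_cases hy1 : y = 1
    · have hx00 : x = 0 := by linarith
      subst hy1; subst hx00
      have h0 : f 0 1 = 0 := by norm_num [f, H]
      rw [h0]; linarith
    have hu : 0 < 1 - x := by
      rcases lt_or_eq_of_le (show x ≤ 1 by linarith) with h | h
      · linarith
      · exact absurd h hx1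
    have hv : 0 < 1 - y := by
      rcases lt_or_eq_of_le (show y ≤ 1 by linarith) with h | h
      · linarith
      · exact absurd h hy1
    have hz : 0 ≤ 1 - x - y := by linarith
    have huv : 0 < (1 - x) * (1 - y) := mul_pos hu hv
    have hsqpos : 0 < Real.sqrt ((1 - x) * (1 - y)) := Real.sqrt_pos.mpr huv
    have hsuv : Real.sqrt ((1 - x) * (1 - y)) = Real.sqrt (1 - x) * Real.sqrt (1 - y) :=
      Real.sqrt_mul hu.le _
    have hsu : Real.sqrt (1 - x) ^ 2 = 1 - x := Real.sq_sqrt hu.le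
    have hsv : Real.sqrt (1 - y) ^ 2 = 1 - y := Real.sq_sqrt hv.le
    have hlsqrt : 2 * Real.log (Real.sqrt ((1 - x) * (1 - y)))
        = Real.log (1 - x) + Real.log (1 - y) := by
      rw [Real.log_sqrt huv.le, Real.log_mul hu.ne' hv.ne']; ring
    have e2 : f x y = (x * Real.log (1 - y) - x * Real.log x)
        + (y * Real.log (1 - x) - y * Real.log y)
        + 2 * ((1 - x - y) * Real.log (Real.sqrt ((1 - x) * (1 - y)))
            - (1 - x - y) * Real.log (1 - x - y)) := by
      rw [fval hx hy hxy]
      linear_combination (-(1 - x - y)) * hlsqrt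
    have hφ2pos : 0 < φ ^ 2 := by positivity
    have b2 := keyb_le (c := φ ^ 2) hy hu hφ2pos
    have b3 := keyb_le (c := φ) hz hsqpos hφpos
    have hL2 : Real.log (φ ^ 2) = 2 * Real.log φ := by
      rw [Real.log_pow]; push_cast; ring
    have hT : x * Real.log (φ ^ 2) + (1 - y) / φ ^ 2 - x
        + (y * Real.log (φ ^ 2) + (1 - x) / φ ^ 2 - y)
        + 2 * ((1 - x - y) * Real.log φ + Real.sqrt ((1 - x) * (1 - y)) / φ - (1 - x - y))
        = 2 * Real.log φ + ((1 - x) / φ ^ 2 + (1 - y) / φ ^ 2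
            + 2 * (Real.sqrt ((1 - x) * (1 - y)) / φ) - ((1 - x) + (1 - y))) := by
      rw [hL2]; ring
    have h6 : (1 - x) / φ ^ 2 + (1 - y) / φ ^ 2 + ((1 - x) + (1 - y)) / φ
        = (1 - x) + (1 - y) := by
      field_simp
      linear_combination ((1 - x) + (1 - y)) * hφsq
        + (-3/4 + (x+y)/4) * hs
    have hAMle : 2 * Real.sqrt ((1 - x) * (1 - y)) ≤ (1 - x) + (1 - y) := by
      nlinarith [sq_nonneg (Real.sqrt (1 - x) - Real.sqrt (1 - y)), hsu, hsv, hsuv]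
    by_cases hxy_eq : x = y
    · -- on the diagonal: strictness comes from the first Gibbs term
      subst hxy_eq
      have hxne : x ≠ (5 - s) / 10 := by
        intro h; exact hne (by rw [h])
      have hqne : 1 - x ≠ φ ^ 2 * x := by
        intro habs
        apply hxne
        have hphi2 : φ ^ 2 = (3 + s) / 2 := by
          rw [hφsq, hφdef]; ring
        rw [hphi2] at habs
        nlinarith [habs, hs]
      have b1 := keyb_lt (c := φ ^ 2) hx hv hφ2pos hqne
      have hRle : (1 - x) / φ ^ 2 + (1 - x) / φ ^ 2
          + 2 * (Real.sqrt ((1 - x) * (1 - x)) / φ) - ((1 - x) + (1 - x)) ≤ 0 := by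
        have h5 : 2 * (Real.sqrt ((1 - x) * (1 - x)) / φ) ≤ ((1 - x) + (1 - x)) / φ := by
          rw [show 2 * (Real.sqrt ((1 - x) * (1 - x)) / φ)
              = (2 * Real.sqrt ((1 - x) * (1 - x))) / φ by ring]
          gcongr
        linarith [h6, h5]
      calc f x x = _ := e2
        _ < x * Real.log (φ ^ 2) + (1 - x) / φ ^ 2 - x
            + (x * Real.log (φ ^ 2) + (1 - x) / φ ^ 2 - x)
            + 2 * ((1 - x - x) * Real.log φ
              + Real.sqrt ((1 - x) * (1 - x)) / φ - (1 - x - x)) := by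
          linarith [b1, b2, b3]
        _ = 2 * Real.log φ + ((1 - x) / φ ^ 2 + (1 - x) / φ ^ 2
            + 2 * (Real.sqrt ((1 - x) * (1 - x)) / φ) - ((1 - x) + (1 - x))) := hT
        _ ≤ 2 * Real.log φ := by linarith [hRle]
    · -- off the diagonal: strictness comes from AM-GM
      have b1 := keyb_le (c := φ ^ 2) hx hv hφ2pos
      have hsne : Real.sqrt (1 - x) ≠ Real.sqrt (1 - y) := by
        intro h
        apply hxy_eq
        have h2 := congrArg (· ^ 2) h
        rw [hsu, hsv] at h2
        linarith
      have hsq2 : 0 < (Real.sqrt (1 - x) - Real.sqrt (1 - y)) ^ 2 := by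
        have hne0 := sub_ne_zero.mpr hsne
        positivity
      have hAMlt : 2 * Real.sqrt ((1 - x) * (1 - y)) < (1 - x) + (1 - y) := by
        nlinarith [hsq2, hsu, hsv, hsuv]
      have hRlt : (1 - x) / φ ^ 2 + (1 - y) / φ ^ 2
          + 2 * (Real.sqrt ((1 - x) * (1 - y)) / φ) - ((1 - x) + (1 - y)) < 0 := by
        have h5 : 2 * (Real.sqrt ((1 - x) * (1 - y)) / φ) < ((1 - x) + (1 - y)) / φ := by
          rw [show 2 * (Real.sqrt ((1 - x) * (1 - y)) / φ)
              = (2 * Real.sqrt ((1 - x) * (1 - y))) / φ by ring]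
          gcongr
        linarith [h6, h5]
      calc f x y = _ := e2
        _ ≤ x * Real.log (φ ^ 2) + (1 - y) / φ ^ 2 - x
            + (y * Real.log (φ ^ 2) + (1 - x) / φ ^ 2 - y)
            + 2 * ((1 - x - y) * Real.log φ
              + Real.sqrt ((1 - x) * (1 - y)) / φ - (1 - x - y)) := by
          linarith [b1, b2, b3]
        _ = 2 * Real.log φ + ((1 - x) / φ ^ 2 + (1 - y) / φ ^ 2
            + 2 * (Real.sqrt ((1 - x) * (1 - y)) / φ) - ((1 - x) + (1 - y))) := hT
        _ < 2 * Real.log φ := by linarith [hRlt]
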